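/- Suppose G is the generator matrix of an [n,k,t,r] functional batch code over 𝔽₂ with t ≥ 1 and n ≥ t + r. Then 2^k − 1 ≤ (n − (t−1)/2) · (n−t)^{r−1} / (r−1)!, where the right-hand side is interpreted as a real number. -/
import Mathlib

section BatchAux
open Finset symmDiff


private lemma batchAux_subset_sum_of_mem_span {n k : ℕ} (f : Fin n → Fin k → ZMod 2) (R : Finset (Fin n))
    (α : Fin k → ZMod 2) (hα : α ∈ Submodule.span (ZMod 2) (f '' (R : Set (Fin n)))) :
    ∃ S : Finset (Fin n), S ⊆ R ∧ ∑ j ∈ S, f j = α := by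
  induction hα using Submodule.span_induction with
  | mem x hx =>
    obtain ⟨j, hj, rfl⟩ := hx
    exact ⟨{j}, by simpa using hj, by simp⟩
  | zero => exact ⟨∅, by simp, by simp⟩
  | add x y hx hy ihx ihy =>
    obtain ⟨S₁, hS₁, rfl⟩ := ihx
    obtain ⟨S₂, hS₂, rfl⟩ := ihy
    refine ⟨S₁ ∆ S₂, fun j hj => ?_, ?_⟩
    · rcases Finset.mem_symmDiff.1 hj with ⟨h, -⟩ | ⟨h, -⟩
      exacts [hS₁ h, hS₂ h]
    · have h1 : S₁ ∆ S₂ ∪ (S₁ ∩ S₂) = S₁ ∪ S₂ := symmDiff_sup_inf S₁ S₂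
      have h2 : Disjoint (S₁ ∆ S₂) (S₁ ∩ S₂) := disjoint_symmDiff_inf S₁ S₂
      have h3 : ∑ j ∈ S₁ ∪ S₂, f j + ∑ j ∈ S₁ ∩ S₂, f j = ∑ j ∈ S₁, f j + ∑ j ∈ S₂, f j :=
        Finset.sum_union_inter
      rw [← h1, Finset.sum_union h2] at h3
      have h4 : ∀ x : Fin k → ZMod 2, x + x = 0 := by
        intro x; funext i; exact CharTwo.add_self_eq_zero (x i)
      rw [← h3, add_assoc, h4, add_zero]
  | smul c x hx ihx =>
    obtain ⟨S, hS, rfl⟩ := ihx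
    have hc : c = 0 ∨ c = 1 := by revert c; decide
    rcases hc with rfl | rfl
    · exact ⟨∅, by simp, by simp⟩
    · exact ⟨S, hS, by simp⟩

-- main counting lemma
private lemma batchAux_card_bound (k n t r : ℕ) (ht : 1 ≤ t) (h : t + r ≤ n) (hr : 1 ≤ r)
    (G : Matrix (Fin k) (Fin n) (ZMod 2))
    (hG : ∀ α : Fin t → Fin k → ZMod 2, (∀ ℓ, α ℓ ≠ 0) →
    ∃ R : Fin t → Finset (Fin n),
      (∀ ℓ₁ ℓ₂ : Fin t, ℓ₁ ≠ ℓ₂ → Disjoint (R ℓ₁) (R ℓ₂)) ∧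
      (∀ ℓ : Fin t, (R ℓ).card ≤ r) ∧
      ∀ ℓ : Fin t,
        α ℓ ∈ Submodule.span (ZMod 2) ((fun j i => G i j) '' (R ℓ : Set (Fin n)))) :
    2 ^ k - 1 ≤ ∑ i ∈ Finset.Icc 1 r, (n - t + 1).choose i := by
  classical
  set col : Fin n → Fin k → ZMod 2 := fun j i => G i j with hcol
  set B : Finset (Fin n) := Finset.univ.filter (fun j : Fin n => t - 1 ≤ (j : ℕ)) with hB
  set T : Finset (Finset (Fin n)) :=
    B.powerset.filter (fun S => S.Nonempty ∧ S.card ≤ r) with hT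
  -- existence of a good recovery set for each nonzero α
  have hEx : ∀ α : Fin k → ZMod 2, α ≠ 0 → ∃ S, S ∈ T ∧ ∑ j ∈ S, col j = α := by
    intro α hα
    obtain ⟨R, hdisj, hcard, hspan⟩ := hG (fun _ => α) (fun _ => hα)
    choose S hSsub hSsum using fun ℓ => batchAux_subset_sum_of_mem_span col (R ℓ) α (hspan ℓ)
    have hne : ∀ ℓ, (S ℓ).Nonempty := by
      intro ℓ
      rcases Finset.eq_empty_or_nonempty (S ℓ) with he | hne
      · exfalso; apply hα; rw [← hSsum ℓ, he]; simp
      · exact hne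
    set κ : Fin t → Fin n := fun ℓ => (S ℓ).min' (hne ℓ) with hκ
    have hκmem : ∀ ℓ, κ ℓ ∈ S ℓ := fun ℓ => Finset.min'_mem _ _
    have hκinj : Function.Injective κ := by
      intro a b hab
      by_contra hne'
      have h1 : κ a ∈ R a := hSsub a (hκmem a)
      have h2 : κ a ∈ R b := hSsub b (hab ▸ hκmem b)
      exact (Finset.disjoint_left.1 (hdisj a b hne')) h1 h2
    -- some ℓ has min' ≥ t - 1
    have hexℓ : ∃ ℓ, t - 1 ≤ ((κ ℓ : Fin n) : ℕ) := by
      by_contra hc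
      push_neg at hc
      have hsub : Finset.univ.image κ ⊆ Finset.univ.filter (fun j : Fin n => (j : ℕ) < t - 1) := by
        intro j hj
        obtain ⟨ℓ, -, rfl⟩ := Finset.mem_image.1 hj
        exact Finset.mem_filter.2 ⟨Finset.mem_univ _, hc ℓ⟩
      have h1 : (Finset.univ.image κ).card = t := by
        rw [Finset.card_image_of_injective _ hκinj, Finset.card_univ, Fintype.card_fin]
      have h2 : (Finset.univ.filter (fun j : Fin n => (j : ℕ) < t - 1)).card ≤ t - 1 := by
        have himg : (Finset.univ.filter (fun j : Fin n => (j : ℕ) < t - 1)).image Fin.val ⊆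
            Finset.range (t - 1) := by
          intro x hx
          obtain ⟨j, hj, rfl⟩ := Finset.mem_image.1 hx
          exact Finset.mem_range.2 (Finset.mem_filter.1 hj).2
        calc (Finset.univ.filter (fun j : Fin n => (j : ℕ) < t - 1)).card
            = ((Finset.univ.filter (fun j : Fin n => (j : ℕ) < t - 1)).image Fin.val).card :=
              (Finset.card_image_of_injective _ Fin.val_injective).symm
          _ ≤ (Finset.range (t - 1)).card := Finset.card_le_card himg
          _ = t - 1 := Finset.card_range _
      have := (Finset.card_le_card hsub).trans h2
      omega
    obtain ⟨ℓ, hℓ⟩ := hexℓ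
    refine ⟨S ℓ, ?_, hSsum ℓ⟩
    rw [hT, Finset.mem_filter, Finset.mem_powerset]
    refine ⟨fun j hj => ?_, hne ℓ, (Finset.card_le_card (hSsub ℓ)).trans (hcard ℓ)⟩
    rw [hB, Finset.mem_filter]
    exact ⟨Finset.mem_univ _, le_trans hℓ (Finset.min'_le _ _ hj)⟩
  -- injection
  set A : Finset (Fin k → ZMod 2) := Finset.univ.erase 0 with hA
  have hAcard : A.card = 2 ^ k - 1 := by
    rw [hA, Finset.card_erase_of_mem (Finset.mem_univ _), Finset.card_univ]
    congr 1
    simp [Fintype.card_fun]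
  have hinj : ∃ φ : (Fin k → ZMod 2) → Finset (Fin n),
      (∀ α ∈ A, φ α ∈ T) ∧ Set.InjOn φ A := by
    refine ⟨fun α => if hα : α ≠ 0 then (hEx α hα).choose else ∅, fun α hα => ?_, ?_⟩
    · have hα0 : α ≠ 0 := Finset.ne_of_mem_erase hα
      simpa only [dif_pos hα0] using (hEx α hα0).choose_spec.1
    · intro α hα β hβ hphi
      have hα0 : α ≠ 0 := Finset.ne_of_mem_erase hα
      have hβ0 : β ≠ 0 := Finset.ne_of_mem_erase hβ
      simp only [dif_pos hα0, dif_pos hβ0] at hphi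
      rw [← (hEx α hα0).choose_spec.2, ← (hEx β hβ0).choose_spec.2, hphi]
  obtain ⟨φ, hmaps, hinjon⟩ := hinj
  have hcard1 : A.card ≤ T.card := Finset.card_le_card_of_injOn φ hmaps hinjon
  -- T.card bound
  have hBcard : B.card = n - t + 1 := by
    have himg : B.image Fin.val = Finset.Ico (t - 1) n := by
      ext x
      simp only [hB, Finset.mem_image, Finset.mem_filter, Finset.mem_univ, true_and,
        Finset.mem_Ico]
      constructor
      · rintro ⟨j, hj, rfl⟩; exact ⟨hj, j.isLt⟩
      · rintro ⟨h1, h2⟩; exact ⟨⟨x, h2⟩, h1, rfl⟩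
    have := Finset.card_image_of_injective B Fin.val_injective
    rw [himg, Nat.card_Ico] at this
    omega
  have hcard2 : T.card ≤ ∑ i ∈ Finset.Icc 1 r, (n - t + 1).choose i := by
    have hsub : T ⊆ (Finset.Icc 1 r).biUnion (fun i => B.powersetCard i) := by
      intro S hS
      rw [hT, Finset.mem_filter, Finset.mem_powerset] at hS
      obtain ⟨hSB, hSne, hSr⟩ := hS
      refine Finset.mem_biUnion.2 ⟨S.card, ?_, Finset.mem_powersetCard.2 ⟨hSB, rfl⟩⟩
      exact Finset.mem_Icc.2 ⟨Finset.card_pos.2 hSne, hSr⟩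
    calc T.card ≤ ((Finset.Icc 1 r).biUnion (fun i => B.powersetCard i)).card :=
          Finset.card_le_card hsub
      _ ≤ ∑ i ∈ Finset.Icc 1 r, (B.powersetCard i).card := Finset.card_biUnion_le
      _ = ∑ i ∈ Finset.Icc 1 r, (n - t + 1).choose i := by
          refine Finset.sum_congr rfl fun i _ => ?_
          rw [Finset.card_powersetCard, hBcard]
  omega



private lemma batchAux_sum_choose_le (m r : ℕ) (hr : 1 ≤ r) (hrm : r ≤ m) :
    (∑ i ∈ Finset.Icc 1 r, ((m + 1).choose i : ℝ)) ≤
      ((m : ℝ) + 1) * (m : ℝ) ^ (r - 1) / ((r - 1).factorial : ℝ) := by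
  induction r, hr using Nat.le_induction with
  | base => simp
  | succ r hr ih =>
    have hrm' : r ≤ m := le_of_lt hrm
    have ih' := ih hrm'
    rw [Finset.sum_Icc_succ_top (by omega : 1 ≤ r + 1)]
    have key : ((m + 1).choose (r + 1) : ℝ) ≤
        ((m : ℝ) + 1) * (m : ℝ) ^ (r - 1) * ((m : ℝ) - r) / (r.factorial : ℝ) := by
      have h1 : ((m + 1) * m.choose r : ℝ) = ((m + 1).choose (r + 1) : ℝ) * (r + 1) := by
        exact_mod_cast congrArg (Nat.cast : ℕ → ℝ) (Nat.add_one_mul_choose_eq m r)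
      have h2 : (m.choose r : ℝ) ≤ (m : ℝ) ^ r / (r.factorial : ℝ) := by
        have := Nat.choose_le_pow_div (α := ℝ) r m
        simpa using this
      have hfac : (0 : ℝ) < (r.factorial : ℝ) := by positivity
      have hmr : (r : ℝ) + 1 ≤ (m : ℝ) := by exact_mod_cast hrm
      -- choose (m+1) (r+1) = (m+1) * choose m r / (r+1)
      have h3 : ((m + 1).choose (r + 1) : ℝ) = ((m : ℝ) + 1) * (m.choose r : ℝ) / ((r : ℝ) + 1) := by
        field_simp
        linarith [h1]
      rw [h3]
      rw [div_le_div_iff₀ (by positivity) hfac]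
      have h4 : ((m : ℝ) + 1) * (m.choose r : ℝ) * (r.factorial : ℝ) ≤
          ((m : ℝ) + 1) * (m : ℝ) ^ r := by
        have := mul_le_mul_of_nonneg_left h2 (by positivity : (0:ℝ) ≤ (m : ℝ) + 1)
        calc ((m : ℝ) + 1) * (m.choose r : ℝ) * (r.factorial : ℝ)
            ≤ ((m : ℝ) + 1) * ((m : ℝ) ^ r / (r.factorial : ℝ)) * (r.factorial : ℝ) := by
              exact mul_le_mul_of_nonneg_right (by exact this) (le_of_lt hfac)
          _ = ((m : ℝ) + 1) * (m : ℝ) ^ r := by field_simp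
      have h5 : ((m : ℝ) + 1) * (m : ℝ) ^ r ≤
          ((m : ℝ) + 1) * (m : ℝ) ^ (r - 1) * ((m : ℝ) - r) * ((r : ℝ) + 1) := by
        have hpow : (m : ℝ) ^ r = (m : ℝ) ^ (r - 1) * (m : ℝ) := by
          rw [← pow_succ]; congr 1; omega
        rw [hpow]
        have hp : (0 : ℝ) ≤ (m : ℝ) ^ (r - 1) := by positivity
        have hkey : (m : ℝ) ≤ ((m : ℝ) - r) * ((r : ℝ) + 1) := by nlinarith
        nlinarith [mul_le_mul_of_nonneg_left hkey hp]
      linarith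
    have hfac1 : ((r + 1 - 1).factorial : ℝ) = (r.factorial : ℝ) := by norm_num
    rw [hfac1]
    have hfr : (r.factorial : ℝ) = (r : ℝ) * ((r - 1).factorial : ℝ) := by
      have : r.factorial = r * (r - 1).factorial := by
        conv_lhs => rw [show r = (r - 1) + 1 by omega]
        rw [Nat.factorial_succ]; congr 1; omega
      rw [this]; push_cast; ring
    have hpow2 : (m : ℝ) ^ (r + 1 - 1) = (m : ℝ) ^ (r - 1) * (m : ℝ) := by
      rw [← pow_succ]; congr 1; omega
    rw [hpow2]
    have hfacpos : (0 : ℝ) < ((r - 1).factorial : ℝ) := by positivity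
    have hrpos : (0 : ℝ) < (r : ℝ) := by exact_mod_cast hr
    have goal : ((m : ℝ) + 1) * (m : ℝ) ^ (r - 1) / ((r - 1).factorial : ℝ)
        + ((m : ℝ) + 1) * (m : ℝ) ^ (r - 1) * ((m : ℝ) - r) / (r.factorial : ℝ)
        = ((m : ℝ) + 1) * ((m : ℝ) ^ (r - 1) * (m : ℝ)) / (r.factorial : ℝ) := by
      rw [hfr]; field_simp; ring
    linarith [ih', key]

end BatchAux



/-- `G` is the generator matrix of an `[n,k,t,r]` functional batch code over `𝔽₂`:
for every `t`-tuple of nonzero vectors `α₁,…,α_t` in `𝔽₂^k` there exist pairwise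
disjoint subsets `R₁,…,R_t` of the column index set, each of size at most `r`, such
that each `α_ℓ` lies in the `𝔽₂`-linear span of the columns of `G` indexed by `R_ℓ`. -/
def IsFunctionalBatchCodeLoc (k n t r : ℕ) (G : Matrix (Fin k) (Fin n) (ZMod 2)) : Prop :=
  ∀ α : Fin t → Fin k → ZMod 2, (∀ ℓ, α ℓ ≠ 0) →
    ∃ R : Fin t → Finset (Fin n),
      (∀ ℓ₁ ℓ₂ : Fin t, ℓ₁ ≠ ℓ₂ → Disjoint (R ℓ₁) (R ℓ₂)) ∧
      (∀ ℓ : Fin t, (R ℓ).card ≤ r) ∧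
      ∀ ℓ : Fin t,
        α ℓ ∈ Submodule.span (ZMod 2) ((fun j i => G i j) '' (R ℓ : Set (Fin n)))

/-- If `G` generates an `[n,k,t,r]` functional batch code with `t ≥ 1` and
`n ≥ t + r`, then `2^k − 1 ≤ (n − (t−1)/2)·(n−t)^{r−1}/(r−1)!` (as reals). -/
theorem batch_code_bound_of_length (k n t r : ℕ) (ht : 1 ≤ t) (h : t + r ≤ n)
    (G : Matrix (Fin k) (Fin n) (ZMod 2))
    (hG : IsFunctionalBatchCodeLoc k n t r G) :
    (2 : ℝ) ^ k - 1 ≤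
      ((n : ℝ) - ((t : ℝ) - 1) / 2) * ((n : ℝ) - (t : ℝ)) ^ (r - 1) /
        ((r - 1).factorial : ℝ) := by
  classical
  have htn : (t : ℝ) ≤ (n : ℝ) := by exact_mod_cast le_trans (Nat.le_add_right t r) h
  have ht1 : (1 : ℝ) ≤ (t : ℝ) := by exact_mod_cast ht
  rcases Nat.eq_zero_or_pos r with hr0 | hr
  · -- r = 0 : then k = 0, and the bound is trivial
    have hk : k = 0 := by
      by_contra hk0
      have hkpos : 0 < k := Nat.pos_of_ne_zero hk0
      obtain ⟨R, hdisj, hcard, hspan⟩ := hG (fun _ _ => (1 : ZMod 2)) (fun ℓ => by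
        intro heq
        have := congrFun heq ⟨0, hkpos⟩
        simp at this)
      have hRempty : R ⟨0, ht⟩ = ∅ := by
        have := hcard ⟨0, ht⟩
        rw [hr0] at this
        exact Finset.card_eq_zero.1 (Nat.le_zero.1 this)
      have := hspan ⟨0, ht⟩
      rw [hRempty] at this
      simp only [Finset.coe_empty, Set.image_empty, Submodule.span_empty,
        Submodule.mem_bot] at this
      have := congrFun this ⟨0, hkpos⟩
      simp at this
    subst hk; subst hr0
    norm_num
    nlinarith
  · set m := n - t with hm
    have hmcast : (m : ℝ) = (n : ℝ) - (t : ℝ) := by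
      rw [hm]; push_cast [Nat.cast_sub (le_trans (Nat.le_add_right t r) h)]; ring
    have hrm : r ≤ m := by omega
    have hEx := batchAux_card_bound k n t r ht h hr G hG
    have step1 : (2 : ℝ) ^ k - 1 ≤ (∑ i ∈ Finset.Icc 1 r, ((m + 1).choose i : ℝ)) := by
      have h2k : 1 ≤ 2 ^ k := Nat.one_le_two_pow
      calc (2 : ℝ) ^ k - 1 = ((2 ^ k - 1 : ℕ) : ℝ) := by push_cast [h2k]; ring
        _ ≤ ((∑ i ∈ Finset.Icc 1 r, (n - t + 1).choose i : ℕ) : ℝ) := by exact_mod_cast hEx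
        _ = _ := by push_cast; rfl
    have step2 := batchAux_sum_choose_le m r hr hrm
    have step3 : ((m : ℝ) + 1) * (m : ℝ) ^ (r - 1) / ((r - 1).factorial : ℝ) ≤
        ((n : ℝ) - ((t : ℝ) - 1) / 2) * ((n : ℝ) - (t : ℝ)) ^ (r - 1) /
        ((r - 1).factorial : ℝ) := by
      have h0 : (0:ℝ) ≤ (n:ℝ) - (t:ℝ) := by linarith
      rw [hmcast]
      gcongr ?_ * ?_ / _ <;> linarith
    linarith
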